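/- In the automaton group of automaton 2427, a((101)^∞) = 01(101)^∞, b((101)^∞) = 00(101)^∞, and c((101)^∞) = 11(101)^∞; consequently c^n((101)^∞) ∼ (101)^∞ for all n ≥ 1, while c^{-2}((101)^∞) = (100)^∞, so c has infinite order. -/

import Mathlib

namespace Stmt18


/-- A Mealy automaton over the binary alphabet with state set `S`. -/
structure Mealy (S : Type) where
  /-- transition function -/
  δ : S → Bool → S
  /-- output function -/
  τ : S → Bool → Bool

namespace Mealy

variable {S : Type} (M : Mealy S)

/-- The state reached from `q` after reading the first `n` letters of `w`. -/
def stateAt (q : S) (w : ℕ → Bool) : ℕ → S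
  | 0 => q
  | n + 1 => M.δ (stateAt q w n) (w n)

/-- The action of state `q` on infinite words. -/
def act (q : S) (w : ℕ → Bool) : ℕ → Bool :=
  fun n => M.τ (M.stateAt q w n) (w n)

/-- The inverse automaton (for automata whose output functions are involutions). -/
def inv : Mealy S := ⟨fun q b => M.δ q (M.τ q b), M.τ⟩

theorem stateAt_inv_act (h : ∀ q b, M.τ q (M.τ q b) = b) (q : S) (w : ℕ → Bool) :
    ∀ n, M.inv.stateAt q (M.act q w) n = M.stateAt q w n := by
  intro n
  induction n with
  | zero => rfl
  | succ n ih =>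
    show M.inv.δ (M.inv.stateAt q (M.act q w) n) (M.act q w n) = M.δ (M.stateAt q w n) (w n)
    rw [ih]
    show M.δ (M.stateAt q w n) (M.τ (M.stateAt q w n) (M.τ (M.stateAt q w n) (w n))) = _
    rw [h]

theorem inv_act (h : ∀ q b, M.τ q (M.τ q b) = b) (q : S) (w : ℕ → Bool) :
    M.inv.act q (M.act q w) = w := by
  funext n
  show M.inv.τ (M.inv.stateAt q (M.act q w) n) (M.act q w n) = w n
  rw [stateAt_inv_act M h]
  show M.τ (M.stateAt q w n) (M.τ (M.stateAt q w n) (w n)) = w n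
  rw [h]

theorem inv_inv (h : ∀ q b, M.τ q (M.τ q b) = b) : M.inv.inv = M := by
  obtain ⟨d, t⟩ := M
  simp only [inv]
  congr 1
  funext q b
  exact congrArg (d q) (h q b)

/-- The permutation of the set of infinite binary words defined by state `q`. -/
def perm (h : ∀ q b, M.τ q (M.τ q b) = b) (q : S) : Equiv.Perm (ℕ → Bool) where
  toFun := M.act q
  invFun := M.inv.act q
  left_inv := fun w => M.inv_act h q w
  right_inv := fun w => by
    have h2 : ∀ q b, M.inv.τ q (M.inv.τ q b) = b := h
    have := M.inv.inv_act h2 q w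
    rwa [M.inv_inv h] at this

end Mealy

/-- Prepend a finite word to an infinite word. -/
def cat (u : List Bool) (w : ℕ → Bool) : ℕ → Bool :=
  fun n => u.getD n (w (n - u.length))

/-- The (semantic) restriction of a transformation of infinite words to the
subtree indexed by the finite word `u`. -/
def resW (f : (ℕ → Bool) → ℕ → Bool) (u : List Bool) : (ℕ → Bool) → ℕ → Bool :=
  fun w n => f (cat u w) (n + u.length)

/-- The periodic infinite word with period `u`. -/
def per (u : List Bool) : ℕ → Bool := fun n => u.getD (n % u.length) false

/-- Left-shift equivalence of infinite words: they share a common infinite tail. -/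
def seq (u v : ℕ → Bool) : Prop := ∃ k l : ℕ, ∀ n, u (n + k) = v (n + l)

inductive St : Type
  | a | b | c
deriving DecidableEq

instance : Fintype St := ⟨{.a, .b, .c}, fun x => by cases x <;> decide⟩

/-- Automaton 2427. -/
def M : Mealy St where
  δ := fun q x => match q, x with
    | .a, false => .c | .a, true => .b
    | .b, false => .c | .b, true => .c
    | .c, false => .c | .c, true => .a
  τ := fun q x => match q with
    | .a => !x
    | .b => !x
    | .c => x

theorem M_inv : ∀ q x, M.τ q (M.τ q x) = x := by decide

/-- The automorphism of the binary tree boundary defined by state `a`. -/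
def a : Equiv.Perm (ℕ → Bool) := M.perm M_inv .a

/-- The automorphism of the binary tree boundary defined by state `b`. -/
def b : Equiv.Perm (ℕ → Bool) := M.perm M_inv .b

/-- The automorphism of the binary tree boundary defined by state `c`. -/
def c : Equiv.Perm (ℕ → Bool) := M.perm M_inv .c


/-! ### Auxiliary lemmas -/

/-- Run the automaton on a finite word, returning the final state. -/
def runL {S : Type} (M : Mealy S) : S → List Bool → S
  | q, [] => q
  | q, x :: u => runL M (M.δ q x) u

/-- Run the automaton on a finite word, returning the output word. -/
def outL {S : Type} (M : Mealy S) : S → List Bool → List Bool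
  | _, [] => []
  | q, x :: u => M.τ q x :: outL M (M.δ q x) u

lemma cat_nil (w : ℕ → Bool) : cat [] w = w := by
  funext n; simp [cat]

lemma cat_succ (x : Bool) (u : List Bool) (w : ℕ → Bool) (n : ℕ) :
    cat (x :: u) w (n + 1) = cat u w n := by
  simp [cat, Nat.succ_sub_succ]

lemma cat_tail (u : List Bool) (w : ℕ → Bool) (n : ℕ) : cat u w (n + u.length) = w n := by
  unfold cat
  rw [List.getD_eq_default _ _ (Nat.le_add_left _ _), Nat.add_sub_cancel]

lemma cat_cat (u v : List Bool) (w : ℕ → Bool) : cat u (cat v w) = cat (u ++ v) w := by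
  induction u with
  | nil => simp [cat_nil]
  | cons x u ih =>
    funext n
    cases n with
    | zero => rfl
    | succ n =>
      show cat (x :: u) (cat v w) (n + 1) = cat (x :: (u ++ v)) w (n + 1)
      rw [cat_succ, cat_succ, ih]

lemma per_add (u : List Bool) (n : ℕ) : per u (n + u.length) = per u n := by
  by_cases h : u.length = 0
  · simp [per, h]
  · simp [per, Nat.add_mod_right]

lemma per_fix (u : List Bool) (hu : 0 < u.length) : per u = cat u (per u) := by
  funext n
  by_cases h : n < u.length
  · rw [per, cat, List.getD_eq_getElem _ _ h, Nat.mod_eq_of_lt h, List.getD_eq_getElem _ _ h]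
  · push_neg at h
    rw [cat, List.getD_eq_default _ _ h, per, per, Nat.mod_eq_sub_mod h]

lemma stateAt_succ' {S : Type} (M : Mealy S) (q : S) (v : ℕ → Bool) (n : ℕ) :
    M.stateAt q v (n + 1) = M.stateAt (M.δ q (v 0)) (fun k => v (k + 1)) n := by
  induction n with
  | zero => rfl
  | succ n ih =>
    show M.δ (M.stateAt q v (n + 1)) (v (n + 1)) = _
    rw [ih]
    rfl

lemma act_succ' {S : Type} (M : Mealy S) (q : S) (v : ℕ → Bool) (n : ℕ) :
    M.act q v (n + 1) = M.act (M.δ q (v 0)) (fun k => v (k + 1)) n := by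
  show M.τ (M.stateAt q v (n + 1)) (v (n + 1)) = _
  rw [stateAt_succ']
  rfl

lemma act_cat {S : Type} (M : Mealy S) (q : S) (u : List Bool) (w : ℕ → Bool) :
    M.act q (cat u w) = cat (outL M q u) (M.act (runL M q u) w) := by
  induction u generalizing q with
  | nil => rw [cat_nil]; show _ = cat [] _; rw [cat_nil]; rfl
  | cons x u ih =>
    funext n
    cases n with
    | zero => rfl
    | succ n =>
      rw [act_succ']
      have h1 : (fun k => cat (x :: u) w (k + 1)) = cat u w := funext fun k => cat_succ x u w k
      have h2 : cat (x :: u) w 0 = x := rfl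
      rw [h1, h2]
      show M.act (M.δ q x) (cat u w) n = cat (M.τ q x :: outL M (M.δ q x) u) (M.act (runL M (M.δ q x) u) w) (n + 1)
      rw [cat_succ, ih]

lemma ext36 (f g : ℕ → Bool) (h : ∀ i, i < 6 → f i = g i)
    (hf : ∀ n, f (n + 6) = f (n + 3)) (hg : ∀ n, g (n + 6) = g (n + 3)) : f = g := by
  funext n
  induction n using Nat.strong_induction_on with
  | _ n ih =>
    by_cases h6 : n < 6
    · exact h n h6
    · obtain ⟨m, rfl⟩ : ∃ m, n = m + 6 := ⟨n - 6, by omega⟩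
      rw [hf, hg]
      exact ih (m + 3) (by omega)

lemma fix_shift {x y z : Bool} {F : ℕ → Bool} (hfix : F = cat [x, y, z] F) (n : ℕ) :
    F (n + 6) = F (n + 3) := by
  conv_lhs => rw [hfix]
  exact cat_tail [x, y, z] F (n + 3)

lemma per3_shift (x y z : Bool) (n : ℕ) :
    per [x, y, z] (n + 6) = per [x, y, z] (n + 3) := per_add [x, y, z] (n + 3)

lemma cat3_shift (x y z : Bool) (F : ℕ → Bool) (hF : ∀ n, F (n + 3) = F n) (n : ℕ) :
    cat [x, y, z] F (n + 6) = cat [x, y, z] F (n + 3) := by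
  have h1 : cat [x, y, z] F (n + 6) = F (n + 3) := cat_tail [x, y, z] F (n + 3)
  have h2 : cat [x, y, z] F (n + 3) = F n := cat_tail [x, y, z] F n
  rw [h1, h2, hF]

lemma cat2_shift (x y : Bool) (F : ℕ → Bool) (hF : ∀ n, F (n + 3) = F n) (n : ℕ) :
    cat [x, y] F (n + 6) = cat [x, y] F (n + 3) := by
  have h1 : cat [x, y] F (n + 6) = F (n + 4) := cat_tail [x, y] F (n + 4)
  have h2 : cat [x, y] F (n + 3) = F (n + 1) := cat_tail [x, y] F (n + 1)
  rw [h1, h2, hF (n + 1)]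

/-- abbreviation for readability in proofs -/
local notation "W" => per [true, false, true]
local notation "V0" => per [true, false, false]
local notation "V1" => per [true, true, false]

lemma fixA : M.act .a W = cat [false, true, true] (M.act .a W) := by
  conv_lhs => rw [per_fix [true, false, true] (by norm_num)]
  rw [act_cat]
  rfl

lemma actA : M.act .a W = per [false, true, true] :=
  (ext36 _ _ (by decide) (fix_shift fixA) (per3_shift _ _ _)).symm.symm

lemma perW3 : ∀ n, W (n + 3) = W n := fun n => per_add [true, false, true] n

lemma perFTT3 : ∀ n, per [false, true, true] (n + 3) = per [false, true, true] n :=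
  fun n => per_add [false, true, true] n

lemma hA : M.act .a W = cat [false, true] W := by
  rw [actA]
  exact ext36 _ _ (by decide) (per3_shift _ _ _) (cat2_shift _ _ _ perW3)

lemma fixB : M.act .b W = cat [false, false, true] (M.act .a W) := by
  conv_lhs => rw [per_fix [true, false, true] (by norm_num)]
  rw [act_cat]
  rfl

lemma hB : M.act .b W = cat [false, false] W := by
  rw [fixB, actA]
  exact ext36 _ _ (by decide) (cat3_shift _ _ _ _ perFTT3) (cat2_shift _ _ _ perW3)

lemma fixC : M.act .c W = cat [true, true, true] (M.act .a W) := by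
  conv_lhs => rw [per_fix [true, false, true] (by norm_num)]
  rw [act_cat]
  rfl

lemma hC : M.act .c W = cat [true, true] W := by
  rw [fixC, actA]
  exact ext36 _ _ (by decide) (cat3_shift _ _ _ _ perFTT3) (cat2_shift _ _ _ perW3)

lemma fixV0 : M.act .c V0 = cat [true, true, false] (M.act .c V0) := by
  conv_lhs => rw [per_fix [true, false, false] (by norm_num)]
  rw [act_cat]
  rfl

lemma actV0 : M.act .c V0 = V1 :=
  ext36 _ _ (by decide) (fix_shift fixV0) (per3_shift _ _ _)

lemma fixV1 : M.act .c V1 = cat [true, false, true] (M.act .c V1) := by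
  conv_lhs => rw [per_fix [true, true, false] (by norm_num)]
  rw [act_cat]
  rfl

lemma actV1 : M.act .c V1 = W :=
  ext36 _ _ (by decide) (fix_shift fixV1) (per3_shift _ _ _)

lemma coe_c (v : ℕ → Bool) : ⇑c v = M.act .c v := rfl
lemma coe_a (v : ℕ → Bool) : ⇑a v = M.act .a v := rfl
lemma coe_b (v : ℕ → Bool) : ⇑b v = M.act .b v := rfl

lemma pow_c_cat : ∀ n, 1 ≤ n → ∃ u : List Bool, ⇑(c ^ n) W = cat u W := by
  intro n hn
  induction n, hn using Nat.le_induction with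
  | base => exact ⟨[true, true], by rw [pow_one, coe_c, hC]⟩
  | succ n hn ih =>
    obtain ⟨u, hu⟩ := ih
    have h1 : ⇑(c ^ (n + 1)) W = M.act .c (cat u W) := by
      rw [pow_succ', Equiv.Perm.mul_apply, hu, coe_c]
    rw [h1, act_cat]
    cases hq : runL M St.c u with
    | a => exact ⟨outL M .c u ++ [false, true], by rw [hA, cat_cat]⟩
    | b => exact ⟨outL M .c u ++ [false, false], by rw [hB, cat_cat]⟩
    | c => exact ⟨outL M .c u ++ [true, true], by rw [hC, cat_cat]⟩

lemma not_cat_eq_V0 (u : List Bool) : cat u W ≠ V0 := by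
  intro h
  set L := u.length with hL
  have e1 := congrFun h (2 * L + 1 + L)
  have e2 := congrFun h (2 * L + 2 + L)
  rw [cat_tail] at e1 e2
  have p1 : V0 (2 * L + 1 + L) = false := by
    have m1 : (2 * L + 1 + L) % 3 = 1 := by omega
    simp [per, m1]
  have p2 : V0 (2 * L + 2 + L) = false := by
    have m2 : (2 * L + 2 + L) % 3 = 2 := by omega
    simp [per, m2]
  have hW : ∀ k, k % 3 ≠ 1 → W k = true := by
    intro k hk
    have : k % 3 = 0 ∨ k % 3 = 2 := by omega
    rcases this with h' | h' <;> simp [per, h']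
  have q1 : (2 * L + 1) % 3 = 1 := by
    by_contra hq
    rw [hW _ hq] at e1
    rw [p1] at e1
    simp at e1
  have q2 : (2 * L + 2) % 3 = 1 := by
    by_contra hq
    rw [hW _ hq] at e2
    rw [p2] at e2
    simp at e2
  omega
/-- In the automaton group of automaton 2427: `a((101)^∞) = 01(101)^∞`,
`b((101)^∞) = 00(101)^∞` and `c((101)^∞) = 11(101)^∞`; consequently
`cⁿ((101)^∞) ∼ (101)^∞` for all `n ≥ 1`, while `c⁻²((101)^∞) = (100)^∞`,
so `c` has infinite order. -/
theorem automaton2427_c_infinite_order :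
    (a (per [true, false, true]) = cat [false, true] (per [true, false, true])) ∧
    (b (per [true, false, true]) = cat [false, false] (per [true, false, true])) ∧
    (c (per [true, false, true]) = cat [true, true] (per [true, false, true])) ∧
    (∀ n : ℕ, 1 ≤ n → seq (⇑(c ^ n) (per [true, false, true])) (per [true, false, true])) ∧
    (⇑(c⁻¹ * c⁻¹) (per [true, false, true]) = per [true, false, false]) ∧
    (∀ n : ℕ, 1 ≤ n → c ^ n ≠ 1) := by
  have h0' : ⇑c (per [true, false, false]) = per [true, true, false] := actV0
  have h1' : ⇑c (per [true, true, false]) = per [true, false, true] := actV1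
  refine ⟨hA, hB, hC, ?_, ?_, ?_⟩
  · intro n hn
    obtain ⟨u, hu⟩ := pow_c_cat n hn
    exact ⟨u.length, 0, fun m => by rw [hu]; exact cat_tail u _ m⟩
  · rw [Equiv.Perm.mul_apply, ← h1', Equiv.Perm.coe_inv, Equiv.symm_apply_apply, ← h0',
      Equiv.symm_apply_apply]
  · intro n hn h1
    have h3n : c ^ (3 * n) = 1 := by
      have e : c ^ (3 * n) = (c ^ n) ^ 3 := by rw [← pow_mul, Nat.mul_comm]
      rw [e, h1, one_pow]
    obtain ⟨u, hu⟩ := pow_c_cat (3 * n - 2) (by omega)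
    have key : ⇑(c ^ (3 * n)) (per [true, false, false]) = cat u (per [true, false, true]) := by
      have e : c ^ (3 * n) = c ^ (3 * n - 2) * c * c := by
        rw [← pow_succ, ← pow_succ]
        congr 1
        omega
      rw [e, Equiv.Perm.mul_apply, Equiv.Perm.mul_apply, h0', h1', hu]
    have : cat u (per [true, false, true]) = per [true, false, false] := by
      rw [← key, h3n]
      rfl
    exact not_cat_eq_V0 u this

end Stmt18
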